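/- Let h ∈ ℝ be irrational, let f ∈ L²(ℝ) be the indicator function of the interval [−1/2, 1/2], and let F_h = {f, t_h f}, where t_h f(x) = f(x − h). Then: (a) E(F_h, S_{hℤ}(f)) = 0, so E*(F_h, hℤ, 1) = 0; and (b) for every φ ∈ L²(ℝ), f and t_h f do not both belong to S_ℤ(φ), so E(F_h, S_ℤ(φ)) > 0 for every φ ∈ L²(ℝ). -/

import Mathlib

open MeasureTheory

noncomputable section

open scoped Classical in
/-- Orthogonal projection onto a submodule (zero if no orthogonal projection exists). -/
def proj {𝕜 H : Type*} [RCLike 𝕜] [NormedAddCommGroup H] [InnerProductSpace 𝕜 H]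
    (V : Submodule 𝕜 H) (x : H) : H :=
  if h : Submodule.HasOrthogonalProjection V then (@Submodule.orthogonalProjectionOnto 𝕜 H _ _ _ V h x : H) else 0

/-- The approximation error `E(F, S) = ∑ i, ‖f i - P_S (f i)‖²`. -/
def err {𝕜 H : Type*} [RCLike 𝕜] [NormedAddCommGroup H] [InnerProductSpace 𝕜 H]
    {m : ℕ} (F : Fin m → H) (S : Submodule 𝕜 H) : ℝ :=
  ∑ i, ‖F i - proj S (F i)‖ ^ 2

abbrev L2R := Lp ℂ 2 (volume : Measure ℝ)

/-- The `Λ`-shift-invariant space of `L²(ℝ)` generated by `Φ`. -/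
def SIS1 (Λ : Set ℝ) (Φ : Set L2R) : Submodule ℂ L2R :=
  (Submodule.span ℂ {k : L2R |
    ∃ l ∈ Λ, ∃ φ ∈ Φ, (k : ℝ → ℂ) =ᵐ[volume] fun x => φ (x - l)}).topologicalClosure

/-- `E*(F, Λ, ℓ)`: the infimum of `E(F, S_Λ(Ψ))` over families `Ψ` of at most `ℓ`
elements of `L²(ℝ)`. -/
def Estar1 {m : ℕ} (F : Fin m → L2R) (Λ : Set ℝ) (ℓ : ℕ) : ℝ :=
  sInf {e | ∃ Ψ : Finset L2R, Ψ.card ≤ ℓ ∧ e = err F (SIS1 Λ (Ψ : Set L2R))}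

open Set
open scoped ComplexConjugate

local notation "⟪" x ", " y "⟫" => @inner ℂ _ _ x y

lemma volIoo_ne_top (a b : ℝ) : volume (Set.Ioo a b) ≠ ⊤ := by
  rw [Real.volume_Ioo]; exact ENNReal.ofReal_ne_top

/-- interval A + k -/
def J (p q : ℝ) (k : ℤ) : Set ℝ := Set.Ioo (p + k) (q + k)

def chi (p q : ℝ) (k : ℤ) : L2R :=
  indicatorConstLp 2 measurableSet_Ioo (volIoo_ne_top (p + k) (q + k)) (1 : ℂ)

def al (p q : ℝ) (k : ℤ) (u : L2R) : ℂ := ⟪chi p q k, u⟫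

lemma al_eq_integral (p q : ℝ) (k : ℤ) (u : L2R) :
    al p q k u = ∫ x in Set.Ioo (p + k) (q + k), u x := by
  rw [al, chi, L2.inner_indicatorConstLp_eq_setIntegral_inner]
  simp [RCLike.inner_apply]

lemma al_add (p q : ℝ) (k : ℤ) (u v : L2R) :
    al p q k (u + v) = al p q k u + al p q k v := inner_add_right _ _ _

lemma al_smul (p q : ℝ) (k : ℤ) (c : ℂ) (u : L2R) :
    al p q k (c • u) = c * al p q k u := inner_smul_right _ _ _

lemma norm_chi (p q : ℝ) (hpq : p ≤ q) (k : ℤ) :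
    ‖chi p q k‖ = Real.sqrt (q - p) := by
  rw [chi, norm_indicatorConstLp two_ne_zero ENNReal.ofNat_ne_top]
  simp only [norm_one, one_mul, Real.volume_Ioo]
  rw [measureReal_def, Real.volume_Ioo, ENNReal.toReal_ofReal (by linarith)]
  rw [show q + (k:ℝ) - (p + k) = q - p by ring]
  rw [show (1:ℝ) / ENNReal.toReal 2 = 1/2 by norm_num, ← Real.sqrt_eq_rpow]

lemma inner_chi_chi (p q : ℝ) (hq1 : q ≤ p + 1) {i j : ℤ} (hij : i ≠ j) :
    ⟪chi p q i, chi p q j⟫ = 0 := by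
  have := al_eq_integral p q i (chi p q j)
  rw [al] at this
  rw [this]
  have h2 : (∫ x in Set.Ioo (p+(i:ℝ)) (q+i), (chi p q j : ℝ → ℂ) x)
      = ∫ x in Set.Ioo (p+(i:ℝ)) (q+i), (Set.Ioo (p+(j:ℝ)) (q+j)).indicator (fun _ => (1:ℂ)) x :=
    setIntegral_congr_ae measurableSet_Ioo
      ((indicatorConstLp_coeFn (p := 2)).mono fun x hx _ => hx)
  rw [h2, setIntegral_indicator measurableSet_Ioo]
  have : Set.Ioo (p+(i:ℝ)) (q+i) ∩ Set.Ioo (p+(j:ℝ)) (q+j) = ∅ := by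
    rcases lt_or_gt_of_ne hij with hlt | hlt
    · apply Set.eq_empty_of_forall_notMem
      intro x ⟨⟨_, h2⟩, ⟨h3, _⟩⟩
      have : (i:ℝ) + 1 ≤ j := by exact_mod_cast hlt
      linarith
    · apply Set.eq_empty_of_forall_notMem
      intro x ⟨⟨h1, _⟩, ⟨_, h4⟩⟩
      have : (j:ℝ) + 1 ≤ i := by exact_mod_cast hlt
      linarith
  rw [this]
  simp

/-- normalized family -/
def en (p q : ℝ) (k : ℤ) : L2R := ((Real.sqrt (q - p) : ℂ))⁻¹ • chi p q k

lemma orthonormal_en (p q : ℝ) (hpq : p < q) (hq1 : q ≤ p + 1) :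
    Orthonormal ℂ (en p q) := by
  have hs : (0:ℝ) < Real.sqrt (q - p) := Real.sqrt_pos.2 (by linarith)
  constructor
  · intro k
    rw [en, norm_smul, norm_chi p q hpq.le]
    simp [norm_inv, Complex.norm_real]
    rw [abs_of_nonneg hs.le]  -- maybe
    field_simp
  · intro i j hij
    rw [en, en, inner_smul_left, inner_smul_right, inner_chi_chi p q hq1 hij]
    simp

lemma bessel (p q : ℝ) (hpq : p < q) (hq1 : q ≤ p + 1) (u : L2R) :
    Summable (fun k : ℤ => ‖al p q k u‖ ^ 2) ∧
    ∑' k : ℤ, ‖al p q k u‖ ^ 2 ≤ (q - p) * ‖u‖ ^ 2 := by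
  have hs : (0:ℝ) < Real.sqrt (q - p) := Real.sqrt_pos.2 (by linarith)
  have hon := orthonormal_en p q hpq hq1
  have key : ∀ k, ‖al p q k u‖ ^ 2 = (q - p) * ‖⟪en p q k, u⟫‖ ^ 2 := by
    intro k
    have : chi p q k = (Real.sqrt (q - p) : ℂ) • en p q k := by
      rw [en, smul_smul]
      rw [mul_inv_cancel₀ (by exact_mod_cast hs.ne')]
      simp
    rw [al, this, inner_smul_left, norm_mul, mul_pow, RCLike.norm_conj]
    rw [Complex.norm_real, Real.norm_eq_abs, abs_of_nonneg hs.le, Real.sq_sqrt (by linarith)]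
  constructor
  · apply Summable.congr ((hon.inner_products_summable u).mul_left (q - p))
    intro k; rw [key k]
  · calc ∑' k : ℤ, ‖al p q k u‖ ^ 2 = (q - p) * ∑' k : ℤ, ‖⟪en p q k, u⟫‖ ^ 2 := by
          rw [← tsum_mul_left]; exact tsum_congr key
    _ ≤ (q - p) * ‖u‖ ^ 2 := by
          have := hon.tsum_inner_products_le u
          exact mul_le_mul_of_nonneg_left this (by linarith)

lemma tsum_cs (a b : ℤ → ℝ) (ha : ∀ k, 0 ≤ a k) (hb : ∀ k, 0 ≤ b k)
    (hsa : Summable (fun k => a k ^ 2)) (hsb : Summable (fun k => b k ^ 2)) :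
    ∑' k, a k * b k ≤ Real.sqrt (∑' k, a k ^ 2) * Real.sqrt (∑' k, b k ^ 2) := by
  apply tsum_le_of_sum_le'
  · positivity
  · intro s
    have h0 : (0:ℝ) ≤ ∑ k ∈ s, a k * b k :=
      Finset.sum_nonneg fun k _ => mul_nonneg (ha k) (hb k)
    calc ∑ k ∈ s, a k * b k = Real.sqrt ((∑ k ∈ s, a k * b k) ^ 2) :=
          (Real.sqrt_sq h0).symm
      _ ≤ Real.sqrt ((∑ k ∈ s, a k ^ 2) * ∑ k ∈ s, b k ^ 2) :=
          Real.sqrt_le_sqrt (Finset.sum_mul_sq_le_sq_mul_sq s a b)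
      _ = Real.sqrt (∑ k ∈ s, a k ^ 2) * Real.sqrt (∑ k ∈ s, b k ^ 2) :=
          Real.sqrt_mul (Finset.sum_nonneg fun k _ => sq_nonneg _) _
      _ ≤ Real.sqrt (∑' k, a k ^ 2) * Real.sqrt (∑' k, b k ^ 2) := by
          gcongr
          · exact Summable.sum_le_tsum s (fun k _ => sq_nonneg _) hsa
          · exact Summable.sum_le_tsum s (fun k _ => sq_nonneg _) hsb

lemma summable_mul_of_sq (a b : ℤ → ℝ) (ha : ∀ k, 0 ≤ a k) (hb : ∀ k, 0 ≤ b k)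
    (hsa : Summable (fun k => a k ^ 2)) (hsb : Summable (fun k => b k ^ 2)) :
    Summable (fun k => a k * b k) := by
  apply Summable.of_nonneg_of_le (fun k => mul_nonneg (ha k) (hb k))
    (fun k => ?_) (((hsa.add hsb).div_const 2))
  have h := sq_nonneg (a k - b k)
  have : (fun k => (a k ^ 2 + b k ^ 2)) k / 2 = (a k ^2 + b k ^2)/2 := rfl
  nlinarith [sq_nonneg (a k - b k)]


def Ib (p q r s : ℝ) (m : ℤ) (u v : L2R) : ℂ := ∑' k : ℤ, al p q k u * al r s (m - k) v

variable {p q r s : ℝ} (hpq : p < q) (hq1 : q ≤ p + 1) (hrs : r < s) (hs1 : s ≤ r + 1)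

lemma bessel2 (hrs : r < s) (hs1 : s ≤ r + 1) (m : ℤ) (v : L2R) :
    Summable (fun k : ℤ => ‖al r s (m - k) v‖ ^ 2) := by
  have := (bessel r s hrs hs1 v).1
  exact (this.comp_injective (fun a b hab => by omega)).congr (fun k => rfl)

section
include hpq hq1 hrs hs1

lemma Ib_summable (m : ℤ) (u v : L2R) :
    Summable (fun k : ℤ => al p q k u * al r s (m - k) v) := by
  apply Summable.of_norm
  have := summable_mul_of_sq (fun k => ‖al p q k u‖) (fun k => ‖al r s (m - k) v‖)
    (fun k => norm_nonneg _) (fun k => norm_nonneg _)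
    (bessel p q hpq hq1 u).1 (bessel2 hrs hs1 m v)
  exact this.congr (fun k => (norm_mul _ _).symm)

lemma Ib_norm_le (m : ℤ) (u v : L2R) :
    ‖Ib p q r s m u v‖ ≤ Real.sqrt ((q - p) * (s - r)) * (‖u‖ * ‖v‖) := by
  have h1 := (bessel p q hpq hq1 u).1
  have h2 := bessel2 hrs hs1 m (v := v)
  calc ‖Ib p q r s m u v‖ ≤ ∑' k : ℤ, ‖al p q k u * al r s (m - k) v‖ :=
        norm_tsum_le_tsum_norm (by
          have := summable_mul_of_sq (fun k => ‖al p q k u‖) (fun k => ‖al r s (m - k) v‖)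
            (fun k => norm_nonneg _) (fun k => norm_nonneg _) h1 h2
          exact this.congr (fun k => (norm_mul _ _).symm))
    _ = ∑' k : ℤ, ‖al p q k u‖ * ‖al r s (m - k) v‖ := tsum_congr fun k => norm_mul _ _
    _ ≤ Real.sqrt (∑' k : ℤ, ‖al p q k u‖ ^ 2) * Real.sqrt (∑' k : ℤ, ‖al r s (m - k) v‖ ^ 2) :=
        tsum_cs _ _ (fun k => norm_nonneg _) (fun k => norm_nonneg _) h1 h2
    _ ≤ Real.sqrt ((q - p) * ‖u‖ ^ 2) * Real.sqrt ((s - r) * ‖v‖ ^ 2) := by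
        gcongr
        · exact (bessel p q hpq hq1 u).2
        · calc ∑' k : ℤ, ‖al r s (m - k) v‖ ^ 2 = ∑' k : ℤ, ‖al r s k v‖ ^ 2 := by
                apply ((Equiv.subLeft m).tsum_eq (fun k => ‖al r s k v‖ ^ 2))
          _ ≤ (s - r) * ‖v‖ ^ 2 := (bessel r s hrs hs1 v).2
    _ = Real.sqrt ((q - p) * (s - r)) * (‖u‖ * ‖v‖) := by
        rw [Real.sqrt_mul (by linarith : (0:ℝ) ≤ q - p) (‖u‖^2),
          Real.sqrt_mul (by linarith : (0:ℝ) ≤ s - r) (‖v‖^2),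
          Real.sqrt_sq (norm_nonneg _), Real.sqrt_sq (norm_nonneg _),
          Real.sqrt_mul (by linarith : (0:ℝ) ≤ q - p) (s - r)]
        ring

lemma Ib_add_left (m : ℤ) (u u' v : L2R) :
    Ib p q r s m (u + u') v = Ib p q r s m u v + Ib p q r s m u' v := by
  rw [Ib, Ib, Ib, ← Summable.tsum_add (Ib_summable hpq hq1 hrs hs1 m u v) (Ib_summable hpq hq1 hrs hs1 m u' v)]
  exact tsum_congr fun k => by rw [al_add, add_mul]

omit hpq hq1 hrs hs1 in
lemma Ib_smul_left (m : ℤ) (c : ℂ) (u v : L2R) :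
    Ib p q r s m (c • u) v = c * Ib p q r s m u v := by
  rw [Ib, Ib, ← tsum_mul_left]
  exact tsum_congr fun k => by rw [al_smul, mul_assoc]

lemma Ib_add_right (m : ℤ) (u v v' : L2R) :
    Ib p q r s m u (v + v') = Ib p q r s m u v + Ib p q r s m u v' := by
  rw [Ib, Ib, Ib, ← Summable.tsum_add (Ib_summable hpq hq1 hrs hs1 m u v) (Ib_summable hpq hq1 hrs hs1 m u v')]
  exact tsum_congr fun k => by rw [al_add, mul_add]

omit hpq hq1 hrs hs1 in
lemma Ib_smul_right (m : ℤ) (c : ℂ) (u v : L2R) :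
    Ib p q r s m u (c • v) = c * Ib p q r s m u v := by
  rw [Ib, Ib, ← tsum_mul_left]
  exact tsum_congr fun k => by rw [al_smul]; ring

end

section
include hpq hq1 hrs hs1

/-- The continuous linear functional `u ↦ Ib u w - Ib w u`. -/
def symmT (m : ℤ) (w : L2R) : L2R →L[ℂ] ℂ :=
  LinearMap.mkContinuous
    { toFun := fun u => Ib p q r s m u w - Ib p q r s m w u
      map_add' := fun u u' => by
        simp only [Ib_add_left hpq hq1 hrs hs1, Ib_add_right hpq hq1 hrs hs1]; ring
      map_smul' := fun c u => by
        simp only [Ib_smul_left, Ib_smul_right, RingHom.id_apply, smul_eq_mul]; ring }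
    (2 * (Real.sqrt ((q - p) * (s - r)) * ‖w‖))
    (fun u => by
      simp only [LinearMap.coe_mk, AddHom.coe_mk]
      calc ‖Ib p q r s m u w - Ib p q r s m w u‖
          ≤ ‖Ib p q r s m u w‖ + ‖Ib p q r s m w u‖ := norm_sub_le _ _
        _ ≤ Real.sqrt ((q - p) * (s - r)) * (‖u‖ * ‖w‖)
            + Real.sqrt ((q - p) * (s - r)) * (‖w‖ * ‖u‖) :=
            add_le_add (Ib_norm_le hpq hq1 hrs hs1 m u w) (Ib_norm_le hpq hq1 hrs hs1 m w u)
        _ = 2 * (Real.sqrt ((q - p) * (s - r)) * ‖w‖) * ‖u‖ := by ring)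

lemma symmT_apply (m : ℤ) (w u : L2R) :
    symmT hpq hq1 hrs hs1 m w u = Ib p q r s m u w - Ib p q r s m w u := rfl

end

lemma ext_zero (D : Set L2R) (T : L2R →L[ℂ] ℂ) (hT : ∀ x ∈ D, T x = 0) :
    ∀ x ∈ (Submodule.span ℂ D).topologicalClosure, T x = 0 := by
  intro x hx
  have h1 : Submodule.span ℂ D ≤ LinearMap.ker (T : L2R →ₗ[ℂ] ℂ) :=
    Submodule.span_le.mpr (fun y hy => LinearMap.mem_ker.mpr (hT y hy))
  have h2 : (Submodule.span ℂ D).topologicalClosure ≤ LinearMap.ker (T : L2R →ₗ[ℂ] ℂ) :=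
    Submodule.topologicalClosure_minimal _ h1 (ContinuousLinearMap.isClosed_ker T)
  exact LinearMap.mem_ker.mp (h2 hx)

include hpq hq1 hrs hs1 in
lemma Ib_symm_SIS (m : ℤ) (φ : L2R)
    (hgen : ∀ u' ∈ {k : L2R | ∃ l ∈ {x : ℝ | ∃ n : ℤ, x = (n:ℝ)}, ∃ ψ ∈ ({φ} : Set L2R),
        (k : ℝ → ℂ) =ᵐ[volume] fun x => ψ (x - l)},
      ∀ v' ∈ {k : L2R | ∃ l ∈ {x : ℝ | ∃ n : ℤ, x = (n:ℝ)}, ∃ ψ ∈ ({φ} : Set L2R),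
        (k : ℝ → ℂ) =ᵐ[volume] fun x => ψ (x - l)},
      Ib p q r s m u' v' = Ib p q r s m v' u')
    (u v : L2R)
    (hu : u ∈ SIS1 {x : ℝ | ∃ n : ℤ, x = (n:ℝ)} {φ})
    (hv : v ∈ SIS1 {x : ℝ | ∃ n : ℤ, x = (n:ℝ)} {φ}) :
    Ib p q r s m u v = Ib p q r s m v u := by
  set D := {k : L2R | ∃ l ∈ {x : ℝ | ∃ n : ℤ, x = (n:ℝ)}, ∃ ψ ∈ ({φ} : Set L2R),
    (k : ℝ → ℂ) =ᵐ[volume] fun x => ψ (x - l)} with hD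
  -- step A: for v' ∈ D, Ib u v' = Ib v' u
  have stepA : ∀ v' ∈ D, Ib p q r s m u v' = Ib p q r s m v' u := by
    intro v' hv'
    have := ext_zero D (symmT hpq hq1 hrs hs1 m v')
      (fun x hx => by rw [symmT_apply, hgen x hx v' hv', sub_self]) u hu
    rw [symmT_apply] at this
    linear_combination this
  -- step B: the functional v'' ↦ Ib u v'' - Ib v'' u vanishes on D, extend to closure
  have := ext_zero D
    (-(symmT hpq hq1 hrs hs1 m u))
    (fun x hx => by
      simp only [ContinuousLinearMap.neg_apply, symmT_apply, neg_eq_zero]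
      rw [stepA x hx, sub_self]) v hv
  simp only [ContinuousLinearMap.neg_apply, symmT_apply, neg_eq_zero] at this
  linear_combination -this

lemma setIntegral_Ioo_comp_sub (φ : ℝ → ℂ) (c d a : ℝ) :
    ∫ x in Set.Ioo c d, φ (x - a) = ∫ x in Set.Ioo (c - a) (d - a), φ x := by
  rw [← integral_indicator measurableSet_Ioo, ← integral_indicator measurableSet_Ioo]
  have hind : (Set.Ioo c d).indicator (fun x => φ (x - a))
      = fun x => (Set.Ioo (c - a) (d - a)).indicator φ (x - a) := by
    funext x
    by_cases hx : x ∈ Set.Ioo c d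
    · rw [Set.indicator_of_mem hx, Set.indicator_of_mem]
      simp only [Set.mem_Ioo] at hx ⊢
      constructor <;> linarith [hx.1, hx.2]
    · rw [Set.indicator_of_notMem hx, Set.indicator_of_notMem]
      simp only [Set.mem_Ioo] at hx ⊢
      intro h1
      exact hx ⟨by linarith [h1.1], by linarith [h1.2]⟩
  rw [hind]
  exact integral_sub_right_eq_self ((Set.Ioo (c - a) (d - a)).indicator φ) a

lemma al_translate (p q : ℝ) (k a : ℤ) (φ w : L2R)
    (hw : (w : ℝ → ℂ) =ᵐ[volume] fun x => (φ : ℝ → ℂ) (x - (a : ℝ))) :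
    al p q k w = al p q (k - a) φ := by
  rw [al_eq_integral, al_eq_integral]
  have h1 : (∫ x in Set.Ioo (p + (k:ℝ)) (q + k), (w : ℝ → ℂ) x)
      = ∫ x in Set.Ioo (p + (k:ℝ)) (q + k), (φ : ℝ → ℂ) (x - (a:ℝ)) :=
    setIntegral_congr_ae measurableSet_Ioo (hw.mono fun x hx _ => hx)
  rw [h1, setIntegral_Ioo_comp_sub]
  norm_num
  congr 2 <;> push_cast <;> ring

lemma Ib_symm_gen (p q r s : ℝ) (m : ℤ) (φ u v : L2R) (a b : ℤ)
    (hu : (u : ℝ → ℂ) =ᵐ[volume] fun x => (φ : ℝ → ℂ) (x - (a : ℝ)))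
    (hv : (v : ℝ → ℂ) =ᵐ[volume] fun x => (φ : ℝ → ℂ) (x - (b : ℝ))) :
    Ib p q r s m u v = Ib p q r s m v u := by
  have key : ∀ (a b : ℤ),
      (∑' k : ℤ, al p q (k - a) φ * al r s (m - k - b) φ)
      = ∑' j : ℤ, al p q j φ * al r s ((m - a - b) - j) φ := by
    intro a b
    have := (Equiv.subRight a).tsum_eq
      (fun j : ℤ => al p q j φ * al r s ((m - a - b) - j) φ)
    rw [← this]
    apply tsum_congr
    intro k
    simp only [Equiv.subRight_apply]
    congr 2
    ring
  rw [Ib, Ib]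
  calc (∑' k : ℤ, al p q k u * al r s (m - k) v)
      = ∑' k : ℤ, al p q (k - a) φ * al r s (m - k - b) φ := by
        apply tsum_congr; intro k
        rw [al_translate p q k a φ u hu, al_translate r s (m - k) b φ v hv]
    _ = ∑' j : ℤ, al p q j φ * al r s ((m - a - b) - j) φ := key a b
    _ = ∑' k : ℤ, al p q (k - b) φ * al r s (m - k - a) φ := by
        rw [key b a]; congr 1; ext j; congr 2; ring
    _ = ∑' k : ℤ, al p q k v * al r s (m - k) u := by
        apply tsum_congr; intro k
        rw [al_translate p q k b φ v hv, al_translate r s (m - k) a φ u hu]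

lemma al_of_ae_indicator (p q c d : ℝ) (k : ℤ) (u : L2R)
    (hu : (u : ℝ → ℂ) =ᵐ[volume] (Set.Icc c d).indicator (fun _ => (1:ℂ))) :
    al p q k u = ((volume (Set.Ioo (p + k) (q + k) ∩ Set.Icc c d)).toReal : ℂ) := by
  rw [al_eq_integral]
  have h1 : (∫ x in Set.Ioo (p + (k:ℝ)) (q + k), (u : ℝ → ℂ) x)
      = ∫ x in Set.Ioo (p + (k:ℝ)) (q + k), (Set.Icc c d).indicator (fun _ => (1:ℂ)) x :=
    setIntegral_congr_ae measurableSet_Ioo (hu.mono fun x hx _ => hx)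
  rw [h1, setIntegral_indicator measurableSet_Icc, setIntegral_const]
  simp
  rfl

lemma al_ind_zero (p q c d : ℝ) (k : ℤ) (u : L2R)
    (hu : (u : ℝ → ℂ) =ᵐ[volume] (Set.Icc c d).indicator (fun _ => (1:ℂ)))
    (hcase : q + k ≤ c ∨ d ≤ p + k) : al p q k u = 0 := by
  rw [al_of_ae_indicator p q c d k u hu]
  have : Set.Ioo (p + (k:ℝ)) (q + k) ∩ Set.Icc c d = ∅ := by
    apply Set.eq_empty_of_forall_notMem
    rintro x ⟨⟨hx1, hx2⟩, hx3, hx4⟩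
    rcases hcase with hc | hc <;> linarith
  rw [this]
  simp

lemma al_ind_full (p q c d : ℝ) (k : ℤ) (u : L2R) (hpq : p ≤ q)
    (hu : (u : ℝ → ℂ) =ᵐ[volume] (Set.Icc c d).indicator (fun _ => (1:ℂ)))
    (h1 : c ≤ p + k) (h2 : q + k ≤ d) : al p q k u = ((q - p : ℝ) : ℂ) := by
  rw [al_of_ae_indicator p q c d k u hu]
  have : Set.Ioo (p + (k:ℝ)) (q + k) ∩ Set.Icc c d = Set.Ioo (p + (k:ℝ)) (q + k) := by
    apply Set.inter_eq_self_of_subset_left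
    intro x ⟨hx1, hx2⟩
    exact ⟨by linarith, by linarith⟩
  rw [this, Real.volume_Ioo, ENNReal.toReal_ofReal (by linarith)]
  norm_num

theorem not_both (h : ℝ) (hirr : Irrational h) (f g φ : L2R)
    (hf : (f : ℝ → ℂ) =ᵐ[volume]
      (Set.Icc (-(1:ℝ)/2) (1/2)).indicator (fun _ => (1 : ℂ)))
    (hg : (g : ℝ → ℂ) =ᵐ[volume]
      fun x => (Set.Icc (-(1:ℝ)/2) (1/2)).indicator (fun _ => (1 : ℂ)) (x - h))
    (hfS : f ∈ SIS1 {x : ℝ | ∃ n : ℤ, x = (n : ℝ)} {φ})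
    (hgS : g ∈ SIS1 {x : ℝ | ∃ n : ℤ, x = (n : ℝ)} {φ}) : False := by
  -- fractional part setup
  obtain ⟨n, hn⟩ : ∃ n : ℤ, n = ⌊h + 1/2⌋ := ⟨_, rfl⟩
  obtain ⟨xs, hxs⟩ : ∃ xs : ℝ, xs = h + 1/2 - n := ⟨_, rfl⟩
  have hfl : (n:ℝ) ≤ h + 1/2 := by rw [hn]; exact Int.floor_le _
  have hfl2 : h + 1/2 < n + 1 := by rw [hn]; exact Int.lt_floor_add_one _
  have hx0 : 0 < xs := by
    rcases lt_or_eq_of_le hfl with hlt | heq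
    · linarith
    · exfalso; exact hirr ⟨(n : ℚ) - 1/2, by push_cast; linarith⟩
  have hx1 : xs < 1 := by linarith
  have hxhalf : xs ≠ 1/2 := by
    intro heq
    exact hirr ⟨(n : ℚ), by push_cast; rw [hxs] at heq; linarith⟩
  -- g as indicator of [h-1/2, h+1/2]
  have hg' : (g : ℝ → ℂ) =ᵐ[volume]
      (Set.Icc (h - 1/2) (h + 1/2)).indicator (fun _ => (1:ℂ)) := by
    refine hg.trans (Filter.Eventually.of_forall fun x => ?_)
    simp only [Set.indicator_apply, Set.mem_Icc]
    have hiff : (-(1:ℝ)/2 ≤ x - h ∧ x - h ≤ 1/2) ↔ (h - 1/2 ≤ x ∧ x ≤ h + 1/2) := by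
      constructor <;> rintro ⟨h1, h2⟩ <;> exact ⟨by linarith, by linarith⟩
    exact if_congr hiff rfl rfl
  have hsupg1 : h - 1/2 = (n:ℝ) - 1 + xs := by simp only [hxs]; ring
  have hsupg2 : h + 1/2 = (n:ℝ) + xs := by simp only [hxs]; ring
  -- generator symmetry hypothesis
  have hgen : ∀ (p q r s : ℝ) (m : ℤ),
      ∀ u' ∈ {k : L2R | ∃ l ∈ {x : ℝ | ∃ n : ℤ, x = (n:ℝ)}, ∃ ψ ∈ ({φ} : Set L2R),
        (k : ℝ → ℂ) =ᵐ[volume] fun x => ψ (x - l)},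
      ∀ v' ∈ {k : L2R | ∃ l ∈ {x : ℝ | ∃ n : ℤ, x = (n:ℝ)}, ∃ ψ ∈ ({φ} : Set L2R),
        (k : ℝ → ℂ) =ᵐ[volume] fun x => ψ (x - l)},
      Ib p q r s m u' v' = Ib p q r s m v' u' := by
    rintro p q r s m u' ⟨l, ⟨a, rfl⟩, ψ, hψ, hu'⟩ v' ⟨l', ⟨b, rfl⟩, ψ', hψ', hv'⟩
    rw [Set.mem_singleton_iff] at hψ hψ'
    rw [hψ] at hu'; rw [hψ'] at hv'
    exact Ib_symm_gen p q r s m φ u' v' a b hu' hv'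
  rcases lt_or_gt_of_ne hxhalf with hcase | hcase
  · -- xs < 1/2 : take A = (xs, 1/2), B = (0, xs), m = n - 1
    have hsymm := Ib_symm_SIS (p := xs) (q := 1/2) (r := 0) (s := xs)
      hcase (by linarith) hx0 (by linarith) (n-1) φ (hgen _ _ _ _ _) f g hfS hgS
    have hfg : Ib xs (1/2) 0 xs (n-1) f g = 0 := by
      rw [Ib]
      convert tsum_zero with k
      rcases lt_trichotomy k 0 with hk | hk | hk
      · rw [al_ind_zero xs (1/2) (-(1:ℝ)/2) (1/2) k f hf (Or.inl (by
          have : (k:ℝ) ≤ -1 := by exact_mod_cast (by omega : k ≤ -1)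
          linarith)), zero_mul]
      · subst hk
        rw [al_ind_zero 0 xs (h - 1/2) (h + 1/2) (n-1-0) g hg' (Or.inl (by
          rw [hsupg1]; push_cast; linarith)), mul_zero]
      · rw [al_ind_zero xs (1/2) (-(1:ℝ)/2) (1/2) k f hf (Or.inr (by
          have : (1:ℝ) ≤ k := by exact_mod_cast hk
          linarith)), zero_mul]
    have hgf : Ib xs (1/2) 0 xs (n-1) g f = ((1/2 - xs : ℝ):ℂ) * ((xs : ℝ):ℂ) := by
      rw [Ib]
      rw [tsum_eq_single (n-1) ?_]
      · rw [al_ind_full xs (1/2) (h - 1/2) (h + 1/2) (n-1) g (by linarith) hg'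
            (by rw [hsupg1]; push_cast; linarith)
            (by rw [hsupg2]; push_cast; linarith),
          show n-1-(n-1) = (0:ℤ) by ring,
          al_ind_full 0 xs (-(1:ℝ)/2) (1/2) 0 f (by linarith) hf
            (by push_cast; linarith) (by push_cast; linarith)]
        norm_num
      · intro k hk
        rcases lt_or_gt_of_ne hk with hklt | hkgt
        · rw [al_ind_zero xs (1/2) (h - 1/2) (h + 1/2) k g hg' (Or.inl (by
            rw [hsupg1]
            have : (k:ℝ) ≤ n - 2 := by exact_mod_cast Int.le_of_lt_add_one (by omega)
            linarith)), zero_mul]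
        · rw [al_ind_zero xs (1/2) (h - 1/2) (h + 1/2) k g hg' (Or.inr (by
            rw [hsupg2]
            have : (n:ℝ) ≤ k := by exact_mod_cast (by omega : n ≤ k)
            linarith)), zero_mul]
    rw [hfg, hgf] at hsymm
    have h1 : (1/2 - xs : ℝ) ≠ 0 := by linarith
    have h2 : (xs : ℝ) ≠ 0 := by linarith
    exact (mul_ne_zero (Complex.ofReal_ne_zero.mpr h1) (Complex.ofReal_ne_zero.mpr h2)) hsymm.symm
  · -- xs > 1/2 : take A = (1/2, xs), B = (0, 1/2), m = n - 1
    have hsymm := Ib_symm_SIS (p := 1/2) (q := xs) (r := 0) (s := 1/2)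
      hcase (by linarith) (by norm_num) (by norm_num) (n-1) φ (hgen _ _ _ _ _) f g hfS hgS
    have hfg : Ib (1/2) xs 0 (1/2) (n-1) f g = ((xs - 1/2 : ℝ):ℂ) * ((1/2 : ℝ):ℂ) := by
      rw [Ib]
      rw [tsum_eq_single (-1) ?_]
      · rw [al_ind_full (1/2) xs (-(1:ℝ)/2) (1/2) (-1) f (by linarith) hf
            (by push_cast; linarith) (by push_cast; linarith),
          show n-1-(-1) = n by ring,
          al_ind_full 0 (1/2) (h - 1/2) (h + 1/2) n g (by norm_num) hg'
            (by rw [hsupg1]; push_cast; linarith) (by rw [hsupg2]; push_cast; linarith)]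
        norm_num
      · intro k hk
        rcases lt_or_gt_of_ne hk with hklt | hkgt
        · rw [al_ind_zero (1/2) xs (-(1:ℝ)/2) (1/2) k f hf (Or.inl (by
            have : (k:ℝ) ≤ -2 := by exact_mod_cast (by omega : k ≤ -2)
            linarith)), zero_mul]
        · rw [al_ind_zero (1/2) xs (-(1:ℝ)/2) (1/2) k f hf (Or.inr (by
            have : (0:ℝ) ≤ k := by exact_mod_cast (by omega : (0:ℤ) ≤ k)
            linarith)), zero_mul]
    have hgf : Ib (1/2) xs 0 (1/2) (n-1) g f = 0 := by
      rw [Ib]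
      convert tsum_zero with k
      rcases eq_or_ne k n with hk | hk
      · rw [hk, show n-1-n = (-1:ℤ) by ring,
          al_ind_zero 0 (1/2) (-(1:ℝ)/2) (1/2) (-1) f hf (Or.inl (by push_cast; linarith)),
          mul_zero]
      · rcases lt_or_gt_of_ne hk with hklt | hkgt
        · rw [al_ind_zero (1/2) xs (h - 1/2) (h + 1/2) k g hg' (Or.inl (by
            rw [hsupg1]
            have : (k:ℝ) ≤ n - 1 := by exact_mod_cast (by omega : k ≤ n - 1)
            linarith)), zero_mul]
        · rw [al_ind_zero (1/2) xs (h - 1/2) (h + 1/2) k g hg' (Or.inr (by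
            rw [hsupg2]
            have : (n:ℝ) + 1 ≤ k := by exact_mod_cast (by omega : n + 1 ≤ k)
            linarith)), zero_mul]
    rw [hfg, hgf] at hsymm
    have h1 : (xs - 1/2 : ℝ) ≠ 0 := by linarith
    exact (mul_ne_zero (Complex.ofReal_ne_zero.mpr h1)
      (Complex.ofReal_ne_zero.mpr (by norm_num))) hsymm

-- helper instances / lemmas
lemma SIS1_isClosed (Λ : Set ℝ) (Φ : Set L2R) : IsClosed ((SIS1 Λ Φ : Submodule ℂ L2R) : Set L2R) :=
  Submodule.isClosed_topologicalClosure _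

lemma SIS1_hasProj (Λ : Set ℝ) (Φ : Set L2R) : Submodule.HasOrthogonalProjection (SIS1 Λ Φ) := by
  haveI := (SIS1_isClosed Λ Φ).completeSpace_coe
  infer_instance

lemma proj_eq_self {V : Submodule ℂ L2R} (hV : Submodule.HasOrthogonalProjection V) {x : L2R}
    (hx : x ∈ V) : proj V x = x := by
  rw [proj, dif_pos hV]
  exact (Submodule.starProjection_eq_self_iff (K := V)).mpr hx

lemma proj_mem {V : Submodule ℂ L2R} (hV : Submodule.HasOrthogonalProjection V) (x : L2R) :
    proj V x ∈ V := by
  rw [proj, dif_pos hV]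
  exact SetLike.coe_mem _

lemma err_two (S : Submodule ℂ L2R) (f g : L2R) :
    err ![f, g] S = ‖f - proj S f‖ ^ 2 + ‖g - proj S g‖ ^ 2 := by
  rw [err, Fin.sum_univ_two]
  simp

lemma err_nonneg {m : ℕ} (F : Fin m → L2R) (S : Submodule ℂ L2R) : 0 ≤ err F S :=
  Finset.sum_nonneg fun i _ => sq_nonneg _


/-- For irrational `h`, the data `F_h = {f, t_h f}` with `f = χ_{[-1/2,1/2]}` is perfectly
approximated by the `hℤ`-invariant space generated by `f`, so `E*(F_h, hℤ, 1) = 0`; but no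
single function `φ` generates a `ℤ`-invariant space containing both `f` and `t_h f`, and
`E(F_h, S_ℤ(φ)) > 0` for every `φ ∈ L²(ℝ)`. -/
theorem irrational_shift_example (h : ℝ) (hirr : Irrational h)
    (f g : L2R)
    (hf : (f : ℝ → ℂ) =ᵐ[volume]
      (Set.Icc (-(1:ℝ)/2) (1/2)).indicator (fun _ => (1 : ℂ)))
    (hg : (g : ℝ → ℂ) =ᵐ[volume]
      fun x => (Set.Icc (-(1:ℝ)/2) (1/2)).indicator (fun _ => (1 : ℂ)) (x - h)) :
    err ![f, g] (SIS1 {x : ℝ | ∃ n : ℤ, x = h * n} {f}) = 0 ∧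
    Estar1 ![f, g] {x : ℝ | ∃ n : ℤ, x = h * n} 1 = 0 ∧
    (∀ φ : L2R, ¬(f ∈ SIS1 {x : ℝ | ∃ n : ℤ, x = (n : ℝ)} {φ} ∧
                  g ∈ SIS1 {x : ℝ | ∃ n : ℤ, x = (n : ℝ)} {φ})) ∧
    (∀ φ : L2R, 0 < err ![f, g] (SIS1 {x : ℝ | ∃ n : ℤ, x = (n : ℝ)} {φ})) := by
  -- membership of f and g in S_{hZ}(f)
  have hgf : (g : ℝ → ℂ) =ᵐ[volume] fun x => (f : ℝ → ℂ) (x - h) := by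
    refine hg.trans ?_
    have := (measurePreserving_sub_right volume h).quasiMeasurePreserving.ae_eq hf.symm
    simpa [Function.comp_def] using this
  have hfmem : f ∈ SIS1 {x : ℝ | ∃ n : ℤ, x = h * n} {f} := by
    apply Submodule.le_topologicalClosure
    apply Submodule.subset_span
    refine ⟨0, ⟨0, by simp⟩, f, rfl, ?_⟩
    exact Filter.Eventually.of_forall fun x => by simp
  have hgmem : g ∈ SIS1 {x : ℝ | ∃ n : ℤ, x = h * n} {f} := by
    apply Submodule.le_topologicalClosure
    apply Submodule.subset_span
    exact ⟨h, ⟨1, by simp⟩, f, rfl, hgf⟩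
  have parta : err ![f, g] (SIS1 {x : ℝ | ∃ n : ℤ, x = h * n} {f}) = 0 := by
    rw [err_two, proj_eq_self (SIS1_hasProj _ _) hfmem, proj_eq_self (SIS1_hasProj _ _) hgmem]
    simp
  refine ⟨parta, ?_, ?_, ?_⟩
  · -- Estar1 = 0
    have hmem0 : (0:ℝ) ∈ {e | ∃ Ψ : Finset L2R, Ψ.card ≤ 1 ∧
        e = err ![f, g] (SIS1 {x : ℝ | ∃ n : ℤ, x = h * n} (Ψ : Set L2R))} := by
      refine ⟨{f}, by simp, ?_⟩
      rw [Finset.coe_singleton, parta]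
    have hbdd : BddBelow {e | ∃ Ψ : Finset L2R, Ψ.card ≤ 1 ∧
        e = err ![f, g] (SIS1 {x : ℝ | ∃ n : ℤ, x = h * n} (Ψ : Set L2R))} := by
      refine ⟨0, fun e ⟨Ψ, _, he⟩ => ?_⟩
      rw [he]; exact err_nonneg _ _
    refine le_antisymm (csInf_le hbdd hmem0) (le_csInf ⟨0, hmem0⟩ ?_)
    rintro e ⟨Ψ, _, he⟩
    rw [he]; exact err_nonneg _ _
  · intro φ ⟨h1, h2⟩
    exact not_both h hirr f g φ hf hg h1 h2
  · intro φ
    set S := SIS1 {x : ℝ | ∃ n : ℤ, x = (n : ℝ)} {φ} with hS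
    have hP := SIS1_hasProj {x : ℝ | ∃ n : ℤ, x = (n : ℝ)} ({φ} : Set L2R)
    have key : ∀ u : L2R, u ∉ S → 0 < ‖u - proj S u‖ ^ 2 := by
      intro u hu
      rcases eq_or_lt_of_le (sq_nonneg ‖u - proj S u‖) with h0 | h0
      · exfalso
        apply hu
        have : u - proj S u = 0 := by
          rw [← norm_eq_zero]
          nlinarith [sq_nonneg ‖u - proj S u‖, h0]
        have : u = proj S u := by rwa [sub_eq_zero] at this
        rw [this]
        exact proj_mem hP u
      · exact h0
    have hnotboth := fun hb1 hb2 => not_both h hirr f g φ hf hg hb1 hb2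
    rw [err_two]
    by_cases hfS : f ∈ S
    · have hgS : g ∉ S := fun hgS => hnotboth hfS hgS
      have := key g hgS
      nlinarith [sq_nonneg ‖f - proj S f‖]
    · have := key f hfS
      nlinarith [sq_nonneg ‖g - proj S g‖]
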